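/- Let ε_1, …, ε_n be the standard basis of ℚ^n, let a_1, …, a_n be positive integers, and let P = conv(0, a_1 ε_1, …, a_n ε_n) ⊆ ℚ^n. Fix r with 1 ≤ r ≤ n and set Q_0 = conv(a_1 ε_1, …, a_r ε_r) and Q_1 = conv(0, a_{r+1} ε_{r+1}, …, a_n ε_n). Let M ⊆ ℚ^n be a subgroup such that: (a) M is generated as a group by P ∩ M; and (b) P ∩ M = (Q_0 ∩ M) ∪ (Q_1 ∩ M). Then for every u = (u_1, …, u_n) ∈ M one has Σ_{i=1}^r u_i / a_i ∈ ℤ; that is, the linear functional v_0 = Σ_{i=1}^r (1/a_i) ε_i^* takes integer values on M. (This is the key integrality step in the proof of the implication (vi) ⇒ (ii) of Theorem 2.6.) -/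

import Mathlib

/-- Key integrality step in (vi) ⇒ (ii) of Theorem 2.6: for the simplex
`P = conv(0, a 1 • ε 1, …, a n • ε n) ⊆ ℚ^n` and a subgroup `M` generated by `P ∩ M`, if the
lattice points of `P` in `M` lie on the two disjoint faces `Q 0 = conv(a i • ε i, i ≤ r)` and
`Q 1 = conv(0, a i • ε i, i > r)`, then the functional `∑_{i ≤ r} (1 / a i) ε i *` takes
integer values on `M`. -/
theorem stmt_8 (n : ℕ) (a : Fin n → ℤ) (ha : ∀ i, 0 < a i)
    (r : ℕ) (hr1 : 1 ≤ r) (hrn : r ≤ n)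
    (M : AddSubgroup (Fin n → ℚ))
    (P : Set (Fin n → ℚ))
    (hP : P = convexHull ℚ ({0} ∪ Set.range fun i : Fin n => Pi.single i (a i : ℚ)))
    (Q0 : Set (Fin n → ℚ))
    (hQ0 : Q0 = convexHull ℚ {x | ∃ i : Fin n, (i : ℕ) < r ∧ x = Pi.single i (a i : ℚ)})
    (Q1 : Set (Fin n → ℚ))
    (hQ1 : Q1 = convexHull ℚ
      ({0} ∪ {x | ∃ i : Fin n, r ≤ (i : ℕ) ∧ x = Pi.single i (a i : ℚ)}))
    (hgen : AddSubgroup.closure (P ∩ (M : Set (Fin n → ℚ))) = M)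
    (hcover : P ∩ (M : Set (Fin n → ℚ)) =
      (Q0 ∩ (M : Set (Fin n → ℚ))) ∪ (Q1 ∩ (M : Set (Fin n → ℚ)))) :
    ∀ u ∈ M, ∃ z : ℤ,
      ∑ i ∈ Finset.univ.filter (fun i : Fin n => (i : ℕ) < r), u i / (a i : ℚ) = (z : ℚ) := by
  set f : (Fin n → ℚ) →ₗ[ℚ] ℚ :=
    { toFun := fun x => ∑ i ∈ Finset.univ.filter (fun i : Fin n => (i : ℕ) < r),
        x i / (a i : ℚ)
      map_add' := by
        intro x y
        simp [add_div, Finset.sum_add_distrib]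
      map_smul' := by
        intro c x
        simp [Finset.mul_sum, mul_div_assoc] } with hf
  have haQ : ∀ i : Fin n, (a i : ℚ) ≠ 0 := fun i => by
    exact_mod_cast (ha i).ne'
  have hf_single : ∀ i : Fin n, f (Pi.single i (a i : ℚ)) =
      if (i : ℕ) < r then 1 else 0 := by
    intro i
    have : ∀ j : Fin n, (Pi.single i (a i : ℚ) : Fin n → ℚ) j / (a j : ℚ) =
        if j = i then 1 else 0 := by
      intro j
      rcases eq_or_ne j i with rfl | h
      · simp [div_self (haQ j)]
      · simp [Pi.single_apply, h]
    simp only [hf, LinearMap.coe_mk, AddHom.coe_mk, this]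
    rw [Finset.sum_ite_eq' (Finset.univ.filter (fun i : Fin n => (i : ℕ) < r)) i
      (fun _ => (1 : ℚ))]
    simp
  have hconv : ∀ c : ℚ, Convex ℚ {x : Fin n → ℚ | f x = c} := fun c =>
    (convex_singleton c).linear_preimage f
  have hQ0f : ∀ x ∈ Q0, f x = 1 := by
    rw [hQ0]
    refine fun x hx => convexHull_min ?_ (hconv 1) hx
    rintro y ⟨i, hi, rfl⟩
    simp [hf_single, hi]
  have hQ1f : ∀ x ∈ Q1, f x = 0 := by
    rw [hQ1]
    refine fun x hx => convexHull_min ?_ (hconv 0) hx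
    rintro y (rfl | ⟨i, hi, rfl⟩)
    · simp
    · simp [hf_single, Nat.not_lt.mpr hi]
  have key : M ≤ AddSubgroup.comap f.toAddMonoidHom (AddSubgroup.zmultiples (1 : ℚ)) := by
    rw [← hgen, AddSubgroup.closure_le]
    intro x hx
    rw [hcover] at hx
    rcases hx with ⟨h0, -⟩ | ⟨h1, -⟩
    · exact ⟨1, by simp [hQ0f x h0]⟩
    · exact ⟨0, by simp [hQ1f x h1]⟩
  intro u hu
  obtain ⟨z, hz⟩ := key hu
  exact ⟨z, by simpa [zsmul_eq_mul, hf] using hz.symm⟩
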